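/- Let R be a faithful, interval-finite signed groupoid set in which every atomic morphism is simple (|Φ_s| = 1). Then R is principal: G is generated by its simple morphisms and for every morphism g, the length l(g) of g with respect to the set of simple morphisms equals |Φ_g|. Conversely, if R is principal then every atomic morphism of R is simple and R is preprincipal. -/

import Mathlib

open CategoryTheory

universe u v

/-- A signed groupoid set: a groupoid `G` acting on a family of definitely involuted
sets `R a` (`a ∈ Ob G`), with involution `neg`, positive parts `pos a`, and the action
commuting with the involution. -/
structure SGS (G : Type u) [Groupoid G] (R : G → Type v) where
  neg : ∀ {a : G}, R a → R a
  pos : ∀ a : G, Set (R a)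
  act : ∀ {a b : G}, (b ⟶ a) → R b → R a
  neg_neg : ∀ {a : G} (x : R a), neg (neg x) = x
  pos_iff : ∀ {a : G} (x : R a), x ∈ pos a ↔ neg x ∉ pos a
  act_id : ∀ {a : G} (x : R a), act (𝟙 a) x = x
  act_comp : ∀ {a b c : G} (g : c ⟶ b) (f : b ⟶ a) (x : R c),
      act f (act g x) = act (g ≫ f) x
  act_neg : ∀ {a b : G} (f : b ⟶ a) (x : R b), act f (neg x) = neg (act f x)

/-- The morphisms of `G` with codomain `a`. -/
abbrev SHoms (G : Type u) [Groupoid G] (a : G) : Type _ := Σ b : G, (b ⟶ a)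

namespace SGS

variable {G : Type u} [Groupoid G] {R : G → Type v} (S : SGS G R)

/-- The inversion set of a morphism `f : b ⟶ a`: positive roots at `a` sent to
negative roots at `b` by `f⁻¹`. -/
def Phi {a b : G} (f : b ⟶ a) : Set (R a) :=
  {α | α ∈ S.pos a ∧ S.act (Groupoid.inv f) α ∉ S.pos b}

/-- The inversion set of an element of `SHoms G a`. -/
def PhiS {a : G} (g : SHoms G a) : Set (R a) := S.Phi g.2

/-- `S` is faithful if only identity morphisms have empty inversion set. -/
def Faithful : Prop :=
  ∀ ⦃a b : G⦄ (f : b ⟶ a), S.Phi f = ∅ → ∃ h : b = a, f = eqToHom h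

/-- `j` is an upper bound of `F` in the weak order at `a`. -/
def IsUB {a : G} (F : Set (SHoms G a)) (j : SHoms G a) : Prop :=
  ∀ g ∈ F, S.PhiS g ⊆ S.PhiS j

/-- `j` is a least upper bound of `F` in the weak order at `a`. -/
def IsLUBw {a : G} (F : Set (SHoms G a)) (j : SHoms G a) : Prop :=
  S.IsUB F j ∧ ∀ k : SHoms G a, S.IsUB F k → S.PhiS j ⊆ S.PhiS k

/-- `S` is complete: the weak order at every object is a complete lattice
(equivalently, every family of morphisms with a common codomain has a join). -/
def Complete : Prop := ∀ (a : G) (F : Set (SHoms G a)), ∃ j : SHoms G a, S.IsLUBw F j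

/-- `S` is finite: finitely many objects, morphisms and roots. -/
def FiniteSGS (_S : SGS G R) : Prop :=
  Finite G ∧ (∀ a b : G, Finite (a ⟶ b)) ∧ ∀ a : G, Finite (R a)

/-- A square `(x, w, y, z)`: a commuting square `xw = yz` with `x(Φ_w) = Φ_y`. -/
def Square {a b c d : G} (x : b ⟶ d) (w : a ⟶ b) (y : c ⟶ d) (z : a ⟶ c) : Prop :=
  w ≫ x = z ≫ y ∧ S.act x '' S.Phi w = S.Phi y

/-- The positive real roots at `a`: the union of all inversion sets at `a`. -/
def posRe (a : G) : Set (R a) := ⋃ g : SHoms G a, S.PhiS g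

/-- An atomic morphism: an atom of the weak order at its codomain. -/
def Atomic {a : G} (g : SHoms G a) : Prop :=
  S.PhiS g ≠ ∅ ∧ ∀ h : SHoms G a, S.PhiS h ⊆ S.PhiS g →
    S.PhiS h = ∅ ∨ S.PhiS h = S.PhiS g

/-- A simple morphism: one whose inversion set is a singleton. -/
def Simple {a b : G} (f : b ⟶ a) : Prop := ∃ α : R a, S.Phi f = {α}

/-- Interval finiteness: every interval `[1ₐ, g]` of a weak order is finite. -/
def IntervalFinite : Prop :=
  ∀ (a : G) (g : SHoms G a), {h : SHoms G a | S.PhiS h ⊆ S.PhiS g}.Finite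

/-- Preprincipal: interval finite, and the inversion set of an atomic morphism is
contained in, or disjoint from, any other inversion set at the same object. -/
def Preprincipal : Prop :=
  S.IntervalFinite ∧ ∀ (a : G) (s g : SHoms G a), S.Atomic s →
    S.PhiS s ⊆ S.PhiS g ∨ S.PhiS s ∩ S.PhiS g = ∅

/-- Antipodal: the weak order at each object has a maximum element. -/
def Antipodal : Prop :=
  ∀ a : G, ∃ ω : SHoms G a, ∀ g : SHoms G a, S.PhiS g ⊆ S.PhiS ω

end SGS

/-- `Word S f n`: `f` is a product of `n` factors, each a simple morphism or the
inverse of a simple morphism (identities are empty products). -/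
inductive Word {G : Type u} [Groupoid G] {R : G → Type v} (S : SGS G R) :
    ∀ {a b : G}, (b ⟶ a) → ℕ → Prop
  | nil (a : G) : Word S (𝟙 a) 0
  | cons {a b c : G} (s : c ⟶ b) (f : b ⟶ a) (n : ℕ) :
      (S.Simple s ∨ S.Simple (Groupoid.inv s)) → Word S f n → Word S (s ≫ f) (n + 1)

/-- Principal: the simple morphisms generate the groupoid and the length of every
morphism with respect to the simple morphisms equals the cardinality of its
inversion set. -/
def SGS.Principal {G : Type u} [Groupoid G] {R : G → Type v} (S : SGS G R) : Prop :=
  (∀ {a b : G} (f : b ⟶ a), Word S f (S.Phi f).ncard) ∧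
  (∀ {a b : G} (f : b ⟶ a) (n : ℕ), Word S f n → (S.Phi f).ncard ≤ n)


namespace SGS

variable {G : Type u} [Groupoid G] {R : G → Type v} (S : SGS G R)

lemma act_act_inv {a b : G} (f : b ⟶ a) (x : R b) :
    S.act (Groupoid.inv f) (S.act f x) = x := by
  rw [S.act_comp, Groupoid.comp_inv, S.act_id]

lemma act_inv_act {a b : G} (f : b ⟶ a) (x : R a) :
    S.act f (S.act (Groupoid.inv f) x) = x := by
  rw [S.act_comp, Groupoid.inv_comp, S.act_id]

lemma act_inj {a b : G} (f : b ⟶ a) : Function.Injective (S.act f) := by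
  intro x y h
  have := congrArg (S.act (Groupoid.inv f)) h
  rwa [S.act_act_inv, S.act_act_inv] at this

lemma act_inv_comp {a b c : G} (g : c ⟶ b) (f : b ⟶ a) (x : R a) :
    S.act (Groupoid.inv (g ≫ f)) x
      = S.act (Groupoid.inv g) (S.act (Groupoid.inv f) x) := by
  rw [S.act_comp]
  congr 1
  simp [Groupoid.inv_eq_inv]

lemma neg_mem_pos {a : G} {x : R a} (hx : x ∉ S.pos a) : S.neg x ∈ S.pos a :=
  (S.pos_iff (S.neg x)).2 (by rwa [S.neg_neg])

lemma mem_act_image {a b : G} (f : b ⟶ a) (t : Set (R b)) (α : R a) :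
    α ∈ S.act f '' t ↔ S.act (Groupoid.inv f) α ∈ t := by
  constructor
  · rintro ⟨x, hx, rfl⟩; rwa [S.act_act_inv]
  · intro h; exact ⟨_, h, S.act_inv_act f α⟩

lemma mem_neg_image {a : G} (t : Set (R a)) (α : R a) :
    α ∈ S.neg '' t ↔ S.neg α ∈ t := by
  constructor
  · rintro ⟨x, hx, rfl⟩; rwa [S.neg_neg]
  · intro h; exact ⟨_, h, S.neg_neg α⟩

lemma phi_id {a : G} : S.Phi (𝟙 a) = ∅ := by
  ext α
  simp only [Phi, Set.mem_setOf_eq, Set.mem_empty_iff_false, iff_false, not_and]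
  intro h hc
  rw [show Groupoid.inv (𝟙 a) = 𝟙 a by simp [Groupoid.inv_eq_inv], S.act_id] at hc
  exact hc h

lemma phi_eqToHom {a b : G} (h : b = a) : S.Phi (eqToHom h) = ∅ := by
  subst h; simpa using S.phi_id

lemma phi_comp {a b c : G} (g : c ⟶ b) (f : b ⟶ a) :
    S.Phi (g ≫ f) = (S.Phi f \ S.neg '' (S.act f '' S.Phi g))
      ∪ (S.act f '' S.Phi g \ S.neg '' S.Phi f) := by
  ext α
  have hβ : S.act (Groupoid.inv f) (S.neg α) = S.neg (S.act (Groupoid.inv f) α) :=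
    S.act_neg _ _
  simp only [Set.mem_union, Set.mem_diff, mem_neg_image, mem_act_image, Phi,
    Set.mem_setOf_eq, S.act_inv_comp, hβ]
  have h1 := S.pos_iff α
  have h2 := S.pos_iff (S.act (Groupoid.inv f) α)
  have h3 := S.pos_iff (S.act (Groupoid.inv g) (S.act (Groupoid.inv f) α))
  rw [show S.act (Groupoid.inv g) (S.neg (S.act (Groupoid.inv f) α))
      = S.neg (S.act (Groupoid.inv g) (S.act (Groupoid.inv f) α)) from S.act_neg _ _]
  tauto

lemma phi_inv {a b : G} (f : b ⟶ a) :
    S.Phi (Groupoid.inv f) = S.neg '' (S.act (Groupoid.inv f) '' S.Phi f) := by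
  ext γ
  have hinv : Groupoid.inv (Groupoid.inv f) = f := by simp [Groupoid.inv_eq_inv]
  simp only [mem_neg_image, mem_act_image, Phi, Set.mem_setOf_eq, hinv]
  rw [show S.act f (S.neg γ) = S.neg (S.act f γ) from S.act_neg _ _,
    show S.act (Groupoid.inv f) (S.neg (S.act f γ)) = S.neg γ from by
      rw [S.act_neg, S.act_act_inv]]
  have h1 := S.pos_iff γ
  have h2 := S.pos_iff (S.act f γ)
  tauto

lemma simple_singleton {a b : G} (s : b ⟶ a)
    (hs : S.Simple s ∨ S.Simple (Groupoid.inv s)) : ∃ α, S.Phi s = {α} := by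
  rcases hs with h | h
  · exact h
  · obtain ⟨β, hβ⟩ := h
    have hinv : Groupoid.inv (Groupoid.inv s) = s := by simp [Groupoid.inv_eq_inv]
    have := S.phi_inv (Groupoid.inv s)
    rw [hinv, hβ] at this
    exact ⟨S.neg (S.act s β), by rw [this, Set.image_singleton, Set.image_singleton]⟩

lemma phi_comp_subset {a b c : G} (g : c ⟶ b) (f : b ⟶ a) :
    S.Phi (g ≫ f) ⊆ S.Phi f ∪ S.act f '' S.Phi g := by
  rw [S.phi_comp]
  intro α hα
  rcases hα with ⟨h, -⟩ | ⟨h, -⟩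
  · exact Or.inl h
  · exact Or.inr h

lemma word_finite {a b : G} {f : b ⟶ a} {n : ℕ} (hw : Word S f n) :
    (S.Phi f).Finite ∧ (S.Phi f).ncard ≤ n := by
  induction hw with
  | nil => rw [S.phi_id]; simp
  | cons s f n hs _ ih =>
    obtain ⟨hfin, hcard⟩ := ih
    obtain ⟨α, hα⟩ := S.simple_singleton s hs
    have hsub := S.phi_comp_subset s f
    rw [hα] at hsub
    have hfin2 : (S.Phi f ∪ S.act f '' {α}).Finite := hfin.union (by simp)
    constructor
    · exact hfin2.subset hsub
    · calc (S.Phi (s ≫ f)).ncard ≤ (S.Phi f ∪ S.act f '' {α}).ncard :=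
            Set.ncard_le_ncard hsub hfin2
        _ ≤ (S.Phi f).ncard + (S.act f '' {α}).ncard := Set.ncard_union_le _ _
        _ ≤ n + 1 := by simp [Set.image_singleton]; omega

lemma word_zero {a b : G} {f : b ⟶ a} (hw : Word S f 0) :
    ∃ h : b = a, f = eqToHom h := by
  cases hw
  exact ⟨rfl, rfl⟩

lemma word_snoc {a b c : G} {f : b ⟶ a} {n : ℕ} (hw : Word S f n) (s : a ⟶ c)
    (hs : S.Simple s ∨ S.Simple (Groupoid.inv s)) : Word S (f ≫ s) (n + 1) := by
  induction hw with
  | nil =>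
    rw [Category.id_comp]
    have := Word.cons s (𝟙 c) 0 hs (Word.nil c)
    rwa [Category.comp_id] at this
  | cons t f m ht _ ih =>
    rw [Category.assoc]
    exact Word.cons t (f ≫ s) (m + 1) ht ih

lemma word_unsnoc {a b : G} {f : b ⟶ a} {n : ℕ} (hw : Word S f (n + 1)) :
    ∃ (c : G) (g : b ⟶ c) (s : c ⟶ a), f = g ≫ s ∧ Word S g n ∧
      (S.Simple s ∨ S.Simple (Groupoid.inv s)) := by
  induction n generalizing a b f with
  | zero =>
    cases hw with
    | cons s f m hs hf =>
      obtain ⟨rfl, rfl⟩ := S.word_zero hf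
      exact ⟨_, 𝟙 _, s, by simp, Word.nil _, hs⟩
  | succ k ih =>
    cases hw with
    | cons s f m hs hf =>
      obtain ⟨c, g, t, rfl, hg, ht⟩ := ih hf
      exact ⟨c, s ≫ g, t, by simp, Word.cons s g k hs hg, ht⟩

lemma phiS_inj (hfa : S.Faithful) {a : G} {g h : SHoms G a}
    (he : S.PhiS g = S.PhiS h) : g = h := by
  obtain ⟨b, g⟩ := g
  obtain ⟨b', h⟩ := h
  simp only [PhiS] at he
  have hk : S.Phi (h ≫ Groupoid.inv g) = ∅ := by
    ext γ
    simp only [Set.mem_empty_iff_false, iff_false]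
    rintro ⟨hγpos, hγneg⟩
    have hinv : Groupoid.inv (Groupoid.inv g) = g := by simp [Groupoid.inv_eq_inv]
    rw [S.act_inv_comp, hinv] at hγneg
    have hδ : S.act g γ ∉ S.pos a := by
      intro hc
      have hmem : S.act g γ ∈ S.Phi g := by
        rw [he]; exact ⟨hc, hγneg⟩
      apply hmem.2
      rw [S.act_act_inv]
      exact hγpos
    have hδ' : S.neg (S.act g γ) ∈ S.Phi g := by
      refine ⟨S.neg_mem_pos hδ, ?_⟩
      rw [S.act_neg, S.act_act_inv]
      exact ((S.pos_iff γ).1 hγpos)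
    rw [he] at hδ'
    apply hδ'.2
    rw [S.act_neg]
    exact S.neg_mem_pos hγneg
  obtain ⟨hbe, hke⟩ := hfa _ hk
  subst hbe
  have : h = g := by
    have := congrArg (· ≫ g) hke
    simpa using this
  subst this
  rfl

lemma phi_removal {a b c : G} (f : b ⟶ a) (h : c ⟶ a) {α : R a}
    (hh : S.Phi h = {α}) (hα : α ∈ S.Phi f) :
    S.Phi (f ≫ Groupoid.inv h) = S.act (Groupoid.inv h) '' (S.Phi f \ {α}) := by
  have hphiinv : S.Phi (Groupoid.inv h) = {S.neg (S.act (Groupoid.inv h) α)} := by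
    rw [S.phi_inv, hh, Set.image_singleton, Set.image_singleton]
  rw [S.phi_comp, hphiinv]
  have h1 : ({S.neg (S.act (Groupoid.inv h) α)} : Set (R c)) \
      S.neg '' (S.act (Groupoid.inv h) '' S.Phi f) = ∅ := by
    rw [Set.diff_eq_empty]
    intro x hx
    rw [Set.mem_singleton_iff] at hx
    subst hx
    rw [S.mem_neg_image, S.neg_neg]
    exact ⟨α, hα, rfl⟩
  have h2 : S.neg '' ({S.neg (S.act (Groupoid.inv h) α)} : Set (R c))
      = {S.act (Groupoid.inv h) α} := by
    rw [Set.image_singleton, S.neg_neg]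
  rw [h1, Set.empty_union, h2,
    ← Set.image_singleton (f := S.act (Groupoid.inv h)) (a := α),
    ← Set.image_diff (S.act_inj (Groupoid.inv h))]


lemma atomic_simple (hp : S.Principal) {a b : G} (f : b ⟶ a)
    (hat : S.Atomic ⟨b, f⟩) : S.Simple f := by
  have hne : S.Phi f ≠ ∅ := hat.1
  have hw := hp.1 f
  have hfin := (S.word_finite hw).1
  have hpos : 0 < (S.Phi f).ncard :=
    (Set.ncard_pos hfin).2 (Set.nonempty_iff_ne_empty.2 hne)
  obtain ⟨k, hk⟩ : ∃ k, (S.Phi f).ncard = k + 1 := ⟨(S.Phi f).ncard - 1, by omega⟩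
  rw [hk] at hw
  obtain ⟨c, g, t, hfs, hg, ht⟩ := S.word_unsnoc hw
  obtain ⟨α, hα⟩ := S.simple_singleton t ht
  by_cases hmem : α ∈ S.Phi f
  · have hsub : S.PhiS ⟨c, t⟩ ⊆ S.PhiS ⟨b, f⟩ := by
      show S.Phi t ⊆ S.Phi f
      rw [hα]
      exact Set.singleton_subset_iff.2 hmem
    rcases hat.2 ⟨c, t⟩ hsub with h0 | heq
    · exact absurd h0 (by show S.Phi t ≠ ∅; rw [hα]; simp)
    · exact ⟨α, by rw [show S.Phi f = S.Phi t from heq.symm, hα]⟩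
  · exfalso
    have hsubset : S.Phi f ⊆ S.act t '' S.Phi g := by
      intro x hx
      have hx' : x ∈ S.Phi (g ≫ t) := by rwa [← hfs]
      rcases S.phi_comp_subset g t hx' with h | h
      · rw [hα, Set.mem_singleton_iff] at h
        exact absurd (h ▸ hx) hmem
      · exact h
    obtain ⟨hgfin, hgcard⟩ := S.word_finite hg
    have h1 : (S.Phi f).ncard ≤ (S.act t '' S.Phi g).ncard :=
      Set.ncard_le_ncard hsubset (hgfin.image _)
    rw [Set.ncard_image_of_injective _ (S.act_inj t)] at h1
    omega

lemma exists_word (hfa : S.Faithful) (hif : S.IntervalFinite)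
    (hat : ∀ {a b : G} (f : b ⟶ a), S.Atomic ⟨b, f⟩ → S.Simple f)
    {a b : G} (f : b ⟶ a) : Word S f (S.Phi f).ncard := by
  suffices H : ∀ (N : ℕ) {a b : G} (f : b ⟶ a),
      {h : SHoms G a | S.PhiS h ⊆ S.PhiS ⟨b, f⟩}.ncard ≤ N →
        Word S f (S.Phi f).ncard from H _ f le_rfl
  intro N
  induction N with
  | zero =>
    intro a b f hbound
    exfalso
    have hIfin : {h : SHoms G a | S.PhiS h ⊆ S.PhiS ⟨b, f⟩}.Finite := hif a ⟨b, f⟩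
    have hmem : (⟨b, f⟩ : SHoms G a) ∈ {h : SHoms G a | S.PhiS h ⊆ S.PhiS ⟨b, f⟩} :=
      fun x hx => hx
    have := (Set.ncard_pos hIfin).2 ⟨_, hmem⟩
    omega
  | succ N ih =>
    intro a b f hbound
    by_cases hempty : S.Phi f = ∅
    · obtain ⟨heq, hfe⟩ := hfa f hempty
      subst heq
      rw [eqToHom_refl] at hfe
      subst hfe
      rw [S.phi_id]
      simpa using Word.nil _
    · have hIfin : {h : SHoms G a | S.PhiS h ⊆ S.PhiS ⟨b, f⟩}.Finite := hif a ⟨b, f⟩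
      set I : Set (SHoms G a) := {h | S.PhiS h ⊆ S.PhiS ⟨b, f⟩} with hI
      have hTfin : {h ∈ I | S.PhiS h ≠ ∅}.Finite := hIfin.subset fun x hx => hx.1
      have hTne : {h ∈ I | S.PhiS h ≠ ∅}.Nonempty :=
        ⟨⟨b, f⟩, fun x hx => hx, hempty⟩
      obtain ⟨m, hmT, hmin⟩ :=
        (by
          obtain ⟨m, hmT, hmin⟩ := hTfin.exists_minimalFor S.PhiS _ hTne
          exact ⟨m, hmT, fun k hk hle => le_antisymm (hmin hk hle) hle⟩ :
          ∃ m ∈ {h ∈ I | S.PhiS h ≠ ∅}, ∀ k ∈ {h ∈ I | S.PhiS h ≠ ∅},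
            S.PhiS k ≤ S.PhiS m → S.PhiS m = S.PhiS k)
      have hatom : S.Atomic m := by
        refine ⟨hmT.2, fun k hk => ?_⟩
        by_cases hke : S.PhiS k = ∅
        · exact Or.inl hke
        · exact Or.inr (hmin k ⟨hk.trans hmT.1, hke⟩ hk).symm
      obtain ⟨c, hm⟩ := m
      obtain ⟨α, hα⟩ := hat hm hatom
      have hαf : α ∈ S.Phi f := hmT.1 (by show α ∈ S.Phi hm; rw [hα]; rfl)
      have hrem := S.phi_removal f hm hα hαf
      -- the interval of f' is strictly smaller
      have himg : S.act hm '' S.Phi (f ≫ Groupoid.inv hm) = S.Phi f \ {α} := by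
        rw [hrem, Set.image_image]
        have : ∀ x ∈ S.Phi f \ {α}, S.act hm (S.act (Groupoid.inv hm) x) = x :=
          fun x _ => S.act_inv_act hm x
        rw [show (fun x => S.act hm (S.act (Groupoid.inv hm) x)) = id from
          funext fun x => S.act_inv_act hm x]
        simp
      have hcompsub : ∀ (k : SHoms G c),
          S.PhiS k ⊆ S.PhiS ⟨b, f ≫ Groupoid.inv hm⟩ →
          S.Phi (k.2 ≫ hm) ⊆ S.Phi f ∧ α ∈ S.Phi (k.2 ≫ hm) := by
        intro k hk
        have himg2 : S.act hm '' S.Phi k.2 ⊆ S.Phi f \ {α} := by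
          rw [← himg]
          exact Set.image_mono hk
        constructor
        · intro x hx
          rcases S.phi_comp_subset k.2 hm hx with h | h
          · rw [hα, Set.mem_singleton_iff] at h
            exact h ▸ hαf
          · exact (himg2 h).1
        · rw [S.phi_comp]
          left
          refine ⟨by rw [hα]; rfl, ?_⟩
          intro hc
          rw [S.mem_neg_image] at hc
          have := (himg2 hc).1
          exact ((S.pos_iff α).1 hαf.1) this.1
      have hlt : {h : SHoms G c |
          S.PhiS h ⊆ S.PhiS ⟨b, f ≫ Groupoid.inv hm⟩}.ncard ≤ N := by
        have hsub1 : {h : SHoms G c |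
            S.PhiS h ⊆ S.PhiS ⟨b, f ≫ Groupoid.inv hm⟩}.ncard ≤
            (I \ {(⟨a, 𝟙 a⟩ : SHoms G a)}).ncard := by
          refine Set.ncard_le_ncard_of_injOn
            (fun k => (⟨k.1, k.2 ≫ hm⟩ : SHoms G a)) ?_ ?_ hIfin.diff
          · intro k hk
            obtain ⟨h1, h2⟩ := hcompsub k hk
            refine ⟨h1, ?_⟩
            intro hc
            rw [Set.mem_singleton_iff] at hc
            have := congrArg S.PhiS hc
            have h3 : S.PhiS (⟨a, 𝟙 a⟩ : SHoms G a) = ∅ := S.phi_id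
            rw [h3] at this
            have : α ∈ (∅ : Set (R a)) := this ▸ h2
            exact this
          · rintro ⟨d, k⟩ - ⟨d', k'⟩ - hkl
            obtain ⟨rfl, hheq⟩ := Sigma.mk.inj_iff.1 hkl
            rw [heq_iff_eq] at hheq
            have := congrArg (· ≫ Groupoid.inv hm) hheq
            simp only [Category.assoc, Groupoid.comp_inv, Category.comp_id] at this
            rw [this]
        have hid : (⟨a, 𝟙 a⟩ : SHoms G a) ∈ I := by
          show S.Phi (𝟙 a) ⊆ S.Phi f
          rw [S.phi_id]
          exact Set.empty_subset _
        have hsub2 := Set.ncard_diff_singleton_lt_of_mem hid hIfin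
        omega
      have hw' := ih (f ≫ Groupoid.inv hm) hlt
      have hfin' := (S.word_finite hw').1
      have hdfin : (S.Phi f \ {α}).Finite := by
        rw [← himg]
        exact hfin'.image _
      have hffin : (S.Phi f).Finite := by
        have : S.Phi f ⊆ insert α (S.Phi f \ {α}) := by
          intro x hx
          by_cases hxα : x = α
          · exact hxα ▸ Set.mem_insert _ _
          · exact Set.mem_insert_of_mem _ ⟨hx, hxα⟩
        exact (hdfin.insert α).subset this
      have hcard : (S.Phi f).ncard = (S.Phi (f ≫ Groupoid.inv hm)).ncard + 1 := by
        rw [hrem, Set.ncard_image_of_injective _ (S.act_inj (Groupoid.inv hm)),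
          Set.ncard_diff_singleton_add_one hαf hffin]
      have hword := S.word_snoc hw' hm (Or.inl ⟨α, hα⟩)
      rw [Category.assoc, Groupoid.inv_comp, Category.comp_id] at hword
      rw [hcard]
      exact hword

end SGS

/-- a faithful interval-finite signed groupoid set all of whose atomic
morphisms are simple is principal; conversely, a faithful principal signed groupoid
set has all atomic morphisms simple, and is preprincipal. -/
theorem stmt_15 {G : Type u} [Groupoid G] {R : G → Type v} (S : SGS G R)
    (hfa : S.Faithful) :
    (S.IntervalFinite → (∀ {a b : G} (f : b ⟶ a), S.Atomic ⟨b, f⟩ → S.Simple f) →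
      S.Principal) ∧
    (S.Principal →
      (∀ {a b : G} (f : b ⟶ a), S.Atomic ⟨b, f⟩ → S.Simple f) ∧ S.Preprincipal) := by
  constructor
  · intro hif hat
    exact ⟨fun f => S.exists_word hfa hif hat f, fun f n hw => (S.word_finite hw).2⟩
  · intro hp
    refine ⟨fun f hat => S.atomic_simple hp f hat, ?_, ?_⟩
    · -- interval finite
      intro a g
      have hfin : (S.PhiS g).Finite := (S.word_finite (hp.1 g.2)).1
      have : {h : SHoms G a | S.PhiS h ⊆ S.PhiS g}
          = S.PhiS ⁻¹' {t : Set (R a) | t ⊆ S.PhiS g} := rfl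
      rw [this]
      exact Set.Finite.preimage
        (fun x _ y _ h => S.phiS_inj hfa h) hfin.finite_subsets
    · -- dichotomy
      intro a t g hat
      have hat' : S.Atomic ⟨t.1, t.2⟩ := hat
      obtain ⟨α, hα⟩ := S.atomic_simple hp t.2 hat'
      have hts : S.PhiS t = {α} := hα
      by_cases hm : α ∈ S.PhiS g
      · left
        rw [hts]
        exact Set.singleton_subset_iff.2 hm
      · right
        rw [hts]
        exact Set.singleton_inter_eq_empty.2 hm
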